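/- Let s₁, s₂, t₁, t₂ ∈ 𝒪 with s₁ ≠ s₂. Then there exists a unique point (x,y) ∈ 𝒪×𝒪 with y = s₁*x + t₁ and y = s₂*x + t₂; moreover x = n(s₁−s₂)⁻¹·((t₂−t₁)*(s₁−s₂)). In other words, two lines of the Okubic affine plane with distinct slopes meet in exactly one point. -/
import Mathlib


open Matrix Complex

noncomputable section

/-- `3 × 3` complex matrices. -/
abbrev M3 : Type := Matrix (Fin 3) (Fin 3) ℂ

/-- The real Okubo algebra: `3 × 3` traceless Hermitian complex matrices. -/
def Okubo : Set M3 := {x | x.IsHermitian ∧ x.trace = 0}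

/-- The constant `μ = (3 + i√3)/6`. -/
def okMu : ℂ := (3 + (Real.sqrt 3 : ℂ) * Complex.I) / 6

/-- The Okubo product `x*y = μ·(xy) + μ̄·(yx) − (1/3)Tr(xy)·Id`. -/
def omul (x y : M3) : M3 :=
  okMu • (x * y) + (starRingEnd ℂ) okMu • (y * x) - ((1 / 3 : ℂ) * (x * y).trace) • (1 : M3)

/-- The Okubic norm `n(x) = (1/6)Tr(x²)` (real-valued on Hermitian matrices). -/
def onorm (x : M3) : ℝ := (1 / 6) * ((x * x).trace).re

/-- The polar form `⟨x,y⟩ = n(x+y) − n(x) − n(y)` of the Okubic norm. -/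
def opolar (x y : M3) : ℝ := onorm (x + y) - onorm x - onorm y

/- ### Auxiliary lemmas -/

lemma conj_okMu : (starRingEnd ℂ) okMu = (3 - (Real.sqrt 3 : ℂ) * Complex.I) / 6 := by
  simp only [okMu, map_div₀, map_add, _root_.map_mul, Complex.conj_I, Complex.conj_ofReal,
    map_ofNat]
  ring

lemma okMu_add : okMu + (starRingEnd ℂ) okMu = 1 := by
  rw [conj_okMu, okMu]; ring

lemma okMu_mul : okMu * (starRingEnd ℂ) okMu = 1/3 := by
  rw [conj_okMu, okMu]
  have h : ((Real.sqrt 3 : ℂ)) ^ 2 = 3 := by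
    norm_cast
    rw [Real.sq_sqrt]; norm_num
  have hI : Complex.I ^ 2 = -1 := Complex.I_sq
  linear_combination (-(Complex.I^2)/36) * h - ((1:ℂ)/12) * hI

/-- The fully polarized Cayley–Hamilton identity for traceless `3×3` matrices. -/
lemma trilin (x y : M3) (hx : x.trace = 0) (hy : y.trace = 0) :
    x * y * x + x * x * y + y * (x * x) =
      (x * y).trace • x + ((1/2 : ℂ) * (x * x).trace) • y + (x * x * y).trace • (1 : M3) := by
  have hx2 : x 2 2 = -(x 0 0) - x 1 1 := by
    simp [Matrix.trace, Matrix.diag, Fin.sum_univ_three] at hx; linear_combination hx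
  have hy2 : y 2 2 = -(y 0 0) - y 1 1 := by
    simp [Matrix.trace, Matrix.diag, Fin.sum_univ_three] at hy; linear_combination hy
  ext i j
  fin_cases i <;> fin_cases j <;>
    simp [Matrix.mul_apply, Matrix.trace, Matrix.diag, Fin.sum_univ_three, Matrix.one_apply] <;>
    rw [hx2, hy2] <;> ring

lemma key1 (x y : M3) (hx : x.trace = 0) (hy : y.trace = 0) :
    omul (omul x y) x = ((1/6 : ℂ) * (x * x).trace) • y := by
  have hb : (starRingEnd ℂ) okMu = 1 - okMu := by linear_combination okMu_add
  have ha2 : okMu ^ 2 = okMu - 1/3 := by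
    have h := okMu_mul; rw [hb] at h; linear_combination -h
  have hxyx : x * y * x = (x * y).trace • x + ((1/2 : ℂ) * (x * x).trace) • y
      + (x * x * y).trace • (1 : M3) - x * x * y - y * x * x := by
    have h3 := trilin x y hx hy
    rw [← Matrix.mul_assoc y x x] at h3
    rw [← h3]; abel
  have ht1 : (x * y * x).trace = (x * x * y).trace := by
    rw [trace_mul_cycle]
  have ht2 : (y * x * x).trace = (x * x * y).trace := by
    rw [Matrix.mul_assoc]; exact trace_mul_comm _ _
  unfold omul
  rw [hb]
  simp only [Matrix.add_mul, Matrix.mul_add, Matrix.sub_mul, Matrix.mul_sub,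
    smul_mul_assoc, mul_smul_comm, Matrix.one_mul, Matrix.mul_one,
    trace_add, trace_sub, trace_smul, smul_eq_mul, Matrix.trace_one,
    ← Matrix.mul_assoc]
  rw [ht1, ht2, hx, hxyx]
  match_scalars
  · linear_combination (2*(x*y).trace) * ha2
  · linear_combination ((x*x).trace) * ha2
  · linear_combination (2*(x*x*y).trace) * ha2
  · linear_combination (-3 : ℂ) * ha2
  · linear_combination (-3 : ℂ) * ha2

lemma key2 (x y : M3) (hx : x.trace = 0) (hy : y.trace = 0) :
    omul x (omul y x) = ((1/6 : ℂ) * (x * x).trace) • y := by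
  have hb : (starRingEnd ℂ) okMu = 1 - okMu := by linear_combination okMu_add
  have ha2 : okMu ^ 2 = okMu - 1/3 := by
    have h := okMu_mul; rw [hb] at h; linear_combination -h
  have hxyx : x * y * x = (x * y).trace • x + ((1/2 : ℂ) * (x * x).trace) • y
      + (x * x * y).trace • (1 : M3) - x * x * y - y * x * x := by
    have h3 := trilin x y hx hy
    rw [← Matrix.mul_assoc y x x] at h3
    rw [← h3]; abel
  have ht1 : (x * y * x).trace = (x * x * y).trace := by
    rw [trace_mul_cycle]
  have ht3 : (y * x).trace = (x * y).trace := trace_mul_comm _ _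
  unfold omul
  rw [hb]
  simp only [Matrix.add_mul, Matrix.mul_add, Matrix.sub_mul, Matrix.mul_sub,
    smul_mul_assoc, mul_smul_comm, Matrix.one_mul, Matrix.mul_one,
    trace_add, trace_sub, trace_smul, smul_eq_mul, Matrix.trace_one,
    ← Matrix.mul_assoc]
  rw [ht1, ht3, hx, hxyx]
  match_scalars
  · linear_combination (2*(x*y).trace) * ha2
  · linear_combination ((x*x).trace) * ha2
  · linear_combination (2*(x*x*y).trace) * ha2
  · linear_combination (-3 : ℂ) * ha2
  · linear_combination (-3 : ℂ) * ha2

lemma rsmul (r : ℝ) (A : M3) : r • A = ((r : ℂ)) • A := by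
  ext i j; simp [Matrix.smul_apply, Complex.real_smul]

lemma trace_real (x y : M3) (hx : x.IsHermitian) (hy : y.IsHermitian) :
    (((x * y).trace.re : ℂ)) = (x * y).trace := by
  rw [← Complex.conj_eq_iff_re]
  calc (starRingEnd ℂ) (x*y).trace = ((x*y)ᴴ).trace := by rw [Matrix.trace_conjTranspose]; rfl
    _ = (yᴴ * xᴴ).trace := by rw [Matrix.conjTranspose_mul]
    _ = (y * x).trace := by rw [hx, hy]
    _ = (x * y).trace := trace_mul_comm _ _

lemma onorm_pos (x : M3) (hx : x.IsHermitian) (hne : x ≠ 0) : 0 < onorm x := by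
  have hre : ((x * x).trace).re = ∑ i : Fin 3, ∑ j : Fin 3, Complex.normSq (x i j) := by
    rw [Matrix.trace]
    simp only [Matrix.diag, Matrix.mul_apply]
    rw [Complex.re_sum]
    refine Finset.sum_congr rfl fun i _ => ?_
    rw [Complex.re_sum]
    refine Finset.sum_congr rfl fun j _ => ?_
    rw [show x j i = (starRingEnd ℂ) (x i j) from (hx.apply j i).symm, Complex.mul_conj]
    simp
  have hex : ∃ i j, x i j ≠ 0 := by
    by_contra h
    push_neg at h
    exact hne (by ext i j; simp [h i j])
  obtain ⟨i, j, hij⟩ := hex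
  have hpos : 0 < ∑ i : Fin 3, ∑ j : Fin 3, Complex.normSq (x i j) := by
    have h1 : 0 < Complex.normSq (x i j) := Complex.normSq_pos.mpr hij
    calc 0 < Complex.normSq (x i j) := h1
      _ ≤ ∑ j : Fin 3, Complex.normSq (x i j) :=
          Finset.single_le_sum (fun k _ => Complex.normSq_nonneg _) (Finset.mem_univ j)
      _ ≤ _ := Finset.single_le_sum
          (fun k _ => Finset.sum_nonneg fun l _ => Complex.normSq_nonneg _) (Finset.mem_univ i)
  unfold onorm
  rw [hre]
  linarith

lemma omul_mem {x y : M3} (hx : x ∈ Okubo) (hy : y ∈ Okubo) : omul x y ∈ Okubo := by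
  obtain ⟨hxh, hxt⟩ := hx
  obtain ⟨hyh, hyt⟩ := hy
  have htr : (starRingEnd ℂ) (x * y).trace = (x * y).trace := by
    rw [Complex.conj_eq_iff_re]; exact trace_real x y hxh hyh
  constructor
  · show (omul x y)ᴴ = omul x y
    unfold omul
    rw [conjTranspose_sub, conjTranspose_add, conjTranspose_smul, conjTranspose_smul,
      conjTranspose_smul, conjTranspose_mul, conjTranspose_mul, conjTranspose_one,
      hxh, hyh]
    simp only [Complex.star_def, Complex.conj_conj, _root_.map_mul, htr,
      map_div₀, _root_.map_one, map_ofNat]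
    abel
  · show (omul x y).trace = 0
    unfold omul
    rw [trace_sub, trace_add, trace_smul, trace_smul, trace_smul, Matrix.trace_one,
      trace_mul_comm y x]
    simp only [smul_eq_mul, Fintype.card_fin, Nat.cast_ofNat]
    linear_combination (x*y).trace * okMu_add

lemma sub_mem_ok {a b : M3} (ha : a ∈ Okubo) (hb : b ∈ Okubo) : a - b ∈ Okubo :=
  ⟨ha.1.sub hb.1, by rw [trace_sub, ha.2, hb.2, sub_zero]⟩

lemma add_mem_ok {a b : M3} (ha : a ∈ Okubo) (hb : b ∈ Okubo) : a + b ∈ Okubo :=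
  ⟨ha.1.add hb.1, by rw [trace_add, ha.2, hb.2, add_zero]⟩

lemma smul_mem_ok (r : ℝ) {a : M3} (ha : a ∈ Okubo) : r • a ∈ Okubo := by
  constructor
  · show (r • a)ᴴ = r • a
    rw [rsmul, conjTranspose_smul, ha.1, Complex.star_def, Complex.conj_ofReal]
  · show (r • a).trace = 0
    rw [rsmul, trace_smul, ha.2, smul_zero]

lemma omul_sub_left (a b x : M3) : omul (a - b) x = omul a x - omul b x := by
  unfold omul
  rw [Matrix.sub_mul, Matrix.mul_sub, trace_sub]
  simp only [smul_sub, mul_sub, sub_smul]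
  abel

lemma omul_smul_right (r : ℝ) (x y : M3) : omul x (r • y) = r • omul x y := by
  rw [rsmul, rsmul]
  unfold omul
  rw [Matrix.mul_smul, Matrix.smul_mul, trace_smul]
  simp only [smul_eq_mul]
  match_scalars <;> ring

lemma okey1 {s x : M3} (hs : s ∈ Okubo) (hx : x ∈ Okubo) :
    omul (omul s x) s = onorm s • x := by
  rw [rsmul, key1 s x hs.2 hx.2]
  congr 1
  unfold onorm
  push_cast
  rw [trace_real s s hs.1 hs.1]

lemma okey2 {s x : M3} (hs : s ∈ Okubo) (hx : x ∈ Okubo) :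
    omul s (omul x s) = onorm s • x := by
  rw [rsmul, key2 s x hs.2 hx.2]
  congr 1
  unfold onorm
  push_cast
  rw [trace_real s s hs.1 hs.1]

/-- Two lines `[s₁,t₁]`, `[s₂,t₂]` of the Okubic affine plane
with distinct slopes `s₁ ≠ s₂` meet in exactly one point, whose first coordinate
is `x = n(s₁−s₂)⁻¹ • ((t₂−t₁)*(s₁−s₂))`. -/
theorem okubo_paper_stmt12 (s₁ t₁ s₂ t₂ : M3)
    (hs₁ : s₁ ∈ Okubo) (ht₁ : t₁ ∈ Okubo) (hs₂ : s₂ ∈ Okubo) (ht₂ : t₂ ∈ Okubo)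
    (hne : s₁ ≠ s₂) :
    (∃! p : M3 × M3, p.1 ∈ Okubo ∧ p.2 ∈ Okubo ∧
      p.2 = omul s₁ p.1 + t₁ ∧ p.2 = omul s₂ p.1 + t₂) ∧
    (∀ x ∈ Okubo, ∀ y ∈ Okubo,
      y = omul s₁ x + t₁ → y = omul s₂ x + t₂ →
        x = (onorm (s₁ - s₂))⁻¹ • omul (t₂ - t₁) (s₁ - s₂)) := by
  have hs : s₁ - s₂ ∈ Okubo := sub_mem_ok hs₁ hs₂
  have hc : t₂ - t₁ ∈ Okubo := sub_mem_ok ht₂ ht₁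
  have hsne : s₁ - s₂ ≠ 0 := sub_ne_zero.mpr hne
  have hn : onorm (s₁ - s₂) ≠ 0 := ne_of_gt (onorm_pos _ hs.1 hsne)
  set x₀ : M3 := (onorm (s₁ - s₂))⁻¹ • omul (t₂ - t₁) (s₁ - s₂) with hx₀def
  have hx₀mem : x₀ ∈ Okubo := smul_mem_ok _ (omul_mem hc hs)
  -- uniqueness of the first coordinate
  have huniq : ∀ x ∈ Okubo, ∀ y : M3, y = omul s₁ x + t₁ → y = omul s₂ x + t₂ → x = x₀ := by
    intro x hx y h1 h2
    have h12 : omul s₁ x + t₁ = omul s₂ x + t₂ := by rw [← h1, ← h2]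
    have he : omul (s₁ - s₂) x = t₂ - t₁ := by
      rw [omul_sub_left]
      calc omul s₁ x - omul s₂ x = (omul s₁ x + t₁) - (omul s₂ x + t₁) := by abel
        _ = (omul s₂ x + t₂) - (omul s₂ x + t₁) := by rw [h12]
        _ = t₂ - t₁ := by abel
    have h3 : omul (omul (s₁ - s₂) x) (s₁ - s₂) = omul (t₂ - t₁) (s₁ - s₂) := by rw [he]
    rw [okey1 hs hx] at h3
    rw [hx₀def, ← h3, smul_smul, inv_mul_cancel₀ hn, one_smul]
  -- the candidate point satisfies both equations
  have hsolve : omul s₁ x₀ + t₁ = omul s₂ x₀ + t₂ := by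
    have hx0 : omul (s₁ - s₂) x₀ = t₂ - t₁ := by
      rw [hx₀def, omul_smul_right, okey2 hs hc, smul_smul,
        inv_mul_cancel₀ hn, one_smul]
    rw [omul_sub_left] at hx0
    calc omul s₁ x₀ + t₁ = (omul s₁ x₀ - omul s₂ x₀) + (omul s₂ x₀ + t₁) := by abel
      _ = (t₂ - t₁) + (omul s₂ x₀ + t₁) := by rw [hx0]
      _ = omul s₂ x₀ + t₂ := by abel
  refine ⟨⟨(x₀, omul s₁ x₀ + t₁), ⟨hx₀mem, add_mem_ok (omul_mem hs₁ hx₀mem) ht₁, rfl, hsolve⟩, ?_⟩,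
    fun x hx y _ h1 h2 => huniq x hx y h1 h2⟩
  rintro ⟨x, y⟩ ⟨hxm, hym, h1, h2⟩
  have hxeq : x = x₀ := huniq x hxm y h1 h2
  refine Prod.ext hxeq ?_
  show y = omul s₁ x₀ + t₁
  rw [hxeq] at h1
  exact h1

end
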